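/- Let d = 1 and θ* > 0, with λ = 0 so that ∇ℓ(θ,x,y) = −σ(yxθ)·yx, and assume μ({1}) > 0. Then: (i) for every θ ≤ 0, lim_{z→∞} P( ∇ℓ(θ,x,y)/|∇ℓ(θ,x,y)| = −1 | |∇ℓ(θ,x,y)| > z ) = 1; and (ii) for every θ > 0, lim_{z→∞} P(|∇ℓ(θ,x,y)| > z) / P(|x| > z) = 0, i.e. the stochastic gradient is no longer heavy-tailed relative to the covariate. -/

import Mathlib

open MeasureTheory ProbabilityTheory Filter Topology Set

/-- The logistic function `σ(u) = e^{-u}/(1+e^{-u})`. -/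
noncomputable def logisticSigma (u : ℝ) : ℝ := Real.exp (-u) / (1 + Real.exp (-u))


lemma logisticSigma_pos (u : ℝ) : 0 < logisticSigma u := by
  unfold logisticSigma; positivity

lemma logisticSigma_le_one (u : ℝ) : logisticSigma u ≤ 1 := by
  unfold logisticSigma
  rw [div_le_one (by positivity)]
  linarith [Real.exp_pos (-u)]

lemma logisticSigma_le_exp (u : ℝ) : logisticSigma u ≤ Real.exp (-u) :=
  div_le_self (Real.exp_pos _).le (by linarith [Real.exp_pos (-u)])

lemma half_le_logisticSigma {u : ℝ} (h : u ≤ 0) : 1/2 ≤ logisticSigma u := by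
  unfold logisticSigma
  rw [div_le_div_iff₀ (by norm_num) (by positivity)]
  have : (1:ℝ) ≤ Real.exp (-u) := Real.one_le_exp (by linarith)
  linarith

lemma logisticSigma_continuous : Continuous logisticSigma := by
  unfold logisticSigma
  exact (Real.continuous_exp.comp continuous_neg).div
    (continuous_const.add (Real.continuous_exp.comp continuous_neg))
    (fun u => by positivity)


lemma tail_bound {Ω : Type*} [MeasurableSpace Ω] (P : Measure Ω) [IsProbabilityMeasure P]
    (x : Ω → ℝ) (y : Ω → ℝ) (hxmeas : Measurable x) (hymeas : Measurable y)
    (hy : ∀ᵐ ω ∂P, y ω = 1 ∨ y ω = -1)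
    (θstar : ℝ) (hθstar : 0 < θstar)
    (hcond : ∀ S : Set ℝ, MeasurableSet S →
        (P ({ω | y ω = 1} ∩ x ⁻¹' S)).toReal
          = ∫ ω in x ⁻¹' S, 1 / (1 + Real.exp (-(x ω * θstar))) ∂P)
    {z : ℝ} (hz : 0 ≤ z) :
    (P ({ω | y ω * x ω < 0} ∩ {ω | |x ω| > z})).toReal
      ≤ Real.exp (-(z * θstar)) * (P {ω | |x ω| > z}).toReal := by
  set c := Real.exp (-(z * θstar)) with hc
  have hc0 : 0 < c := Real.exp_pos _
  set f : Ω → ℝ := fun ω => 1 / (1 + Real.exp (-(x ω * θstar))) with hf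
  have hfmeas : Measurable f := by
    apply Measurable.div measurable_const
    exact (measurable_const.add ((hxmeas.mul_const θstar).neg.exp))
  have hf01 : ∀ ω, 0 ≤ f ω ∧ f ω ≤ 1 := by
    intro ω
    constructor
    · positivity
    · rw [div_le_one (by positivity)]; linarith [Real.exp_pos (-(x ω * θstar))]
  have hfint : Integrable f P := by
    refine (integrable_const (1:ℝ)).mono' hfmeas.aestronglyMeasurable ?_
    filter_upwards with ω
    rw [Real.norm_eq_abs, abs_of_nonneg (hf01 ω).1]
    exact (hf01 ω).2
  have hmT : MeasurableSet ({ω | y ω = 1} ∩ x ⁻¹' Ioi z) :=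
    (hymeas (measurableSet_singleton 1)).inter (hxmeas measurableSet_Ioi)
  -- bound on B1 = {y=1} ∩ {x < -z}
  have hB1 : (P ({ω | y ω = 1} ∩ x ⁻¹' Iio (-z))).toReal ≤ c * (P (x ⁻¹' Iio (-z))).toReal := by
    rw [hcond _ measurableSet_Iio]
    calc ∫ ω in x ⁻¹' Iio (-z), f ω ∂P ≤ ∫ ω in x ⁻¹' Iio (-z), c ∂P := by
          refine setIntegral_mono_on hfint.integrableOn (integrableOn_const (measure_ne_top _ _))
            (hxmeas measurableSet_Iio) ?_
          intro ω hω
          simp only [mem_preimage, mem_Iio] at hω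
          have hv : x ω * θstar ≤ -(z * θstar) := by nlinarith
          have h1 : f ω ≤ Real.exp (x ω * θstar) := by
            rw [hf]
            have := Real.exp_pos (-(x ω * θstar))
            rw [div_le_iff₀ (by positivity), mul_add, mul_one, ← Real.exp_add]
            have h0 : x ω * θstar + -(x ω * θstar) = 0 := by ring
            rw [h0, Real.exp_zero]
            linarith [Real.exp_pos (x ω * θstar)]
          calc f ω ≤ Real.exp (x ω * θstar) := h1
            _ ≤ c := Real.exp_le_exp.2 hv
      _ = c * (P (x ⁻¹' Iio (-z))).toReal := by
          rw [setIntegral_const, smul_eq_mul, mul_comm, measureReal_def]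
  -- lower bound on T = {y=1} ∩ {x > z}
  have hT : (1 - c) * (P (x ⁻¹' Ioi z)).toReal ≤ (P ({ω | y ω = 1} ∩ x ⁻¹' Ioi z)).toReal := by
    rw [hcond _ measurableSet_Ioi]
    calc (1 - c) * (P (x ⁻¹' Ioi z)).toReal = ∫ ω in x ⁻¹' Ioi z, (1 - c) ∂P := by
          rw [setIntegral_const, smul_eq_mul, mul_comm, measureReal_def]
      _ ≤ ∫ ω in x ⁻¹' Ioi z, f ω ∂P := by
          refine setIntegral_mono_on (integrableOn_const (measure_ne_top _ _))
            hfint.integrableOn (hxmeas measurableSet_Ioi) ?_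
          intro ω hω
          simp only [mem_preimage, mem_Ioi] at hω
          set t := Real.exp (-(x ω * θstar)) with ht
          have ht0 : 0 < t := Real.exp_pos _
          have htc : t ≤ c := by
            rw [ht, hc]
            apply Real.exp_le_exp.2
            nlinarith
          have h2 : 1 - t ≤ f ω := by
            rw [hf]
            simp only [← ht]
            rw [le_div_iff₀ (by positivity)]
            nlinarith
          linarith
  -- bound on B2 = {y=-1} ∩ {x > z}
  have hB2 : (P ({ω | y ω = -1} ∩ x ⁻¹' Ioi z)).toReal ≤ c * (P (x ⁻¹' Ioi z)).toReal := by
    have hdisj : Disjoint ({ω | y ω = -1} ∩ x ⁻¹' Ioi z) ({ω | y ω = 1} ∩ x ⁻¹' Ioi z) := by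
      rw [Set.disjoint_left]
      rintro ω ⟨h1, -⟩ ⟨h2, -⟩
      rw [mem_setOf_eq] at h1 h2
      rw [h2] at h1; norm_num at h1
    have hun : P ({ω | y ω = -1} ∩ x ⁻¹' Ioi z) + P ({ω | y ω = 1} ∩ x ⁻¹' Ioi z)
        ≤ P (x ⁻¹' Ioi z) := by
      rw [← measure_union hdisj hmT]
      exact measure_mono (union_subset inter_subset_right inter_subset_right)
    have h3 : (P ({ω | y ω = -1} ∩ x ⁻¹' Ioi z)).toReal + (P ({ω | y ω = 1} ∩ x ⁻¹' Ioi z)).toReal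
        ≤ (P (x ⁻¹' Ioi z)).toReal := by
      rw [← ENNReal.toReal_add (measure_ne_top _ _) (measure_ne_top _ _)]
      exact ENNReal.toReal_mono (measure_ne_top _ _) hun
    nlinarith [ENNReal.toReal_nonneg (a := P (x ⁻¹' Ioi z))]
  -- the null set
  have hN : P {ω | ¬(y ω = 1 ∨ y ω = -1)} = 0 := ae_iff.mp hy
  -- inclusion
  have hsub : {ω | y ω * x ω < 0} ∩ {ω | |x ω| > z} ⊆
      (({ω | y ω = 1} ∩ x ⁻¹' Iio (-z)) ∪ ({ω | y ω = -1} ∩ x ⁻¹' Ioi z))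
        ∪ {ω | ¬(y ω = 1 ∨ y ω = -1)} := by
    rintro ω ⟨h1, h2⟩
    rw [mem_setOf_eq] at h1
    rw [mem_setOf_eq] at h2
    by_cases hyω : y ω = 1 ∨ y ω = -1
    · left
      rcases hyω with h | h
      · left
        refine ⟨h, ?_⟩
        rw [h, one_mul] at h1
        simp only [mem_preimage, mem_Iio]
        rcases abs_cases (x ω) with ⟨he, -⟩ | ⟨he, -⟩ <;> linarith
      · right
        refine ⟨h, ?_⟩
        rw [h] at h1
        have hx0 : 0 < x ω := by nlinarith
        simp only [mem_preimage, mem_Ioi]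
        rcases abs_cases (x ω) with ⟨he, -⟩ | ⟨he, -⟩ <;> linarith
    · right; exact hyω
  have hmain : (P ({ω | y ω * x ω < 0} ∩ {ω | |x ω| > z})).toReal
      ≤ (P ({ω | y ω = 1} ∩ x ⁻¹' Iio (-z))).toReal
        + (P ({ω | y ω = -1} ∩ x ⁻¹' Ioi z)).toReal := by
    have h4 : P ({ω | y ω * x ω < 0} ∩ {ω | |x ω| > z})
        ≤ P ({ω | y ω = 1} ∩ x ⁻¹' Iio (-z)) + P ({ω | y ω = -1} ∩ x ⁻¹' Ioi z) := by
      calc P ({ω | y ω * x ω < 0} ∩ {ω | |x ω| > z})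
          ≤ P ((({ω | y ω = 1} ∩ x ⁻¹' Iio (-z)) ∪ ({ω | y ω = -1} ∩ x ⁻¹' Ioi z))
              ∪ {ω | ¬(y ω = 1 ∨ y ω = -1)}) := measure_mono hsub
        _ ≤ P (({ω | y ω = 1} ∩ x ⁻¹' Iio (-z)) ∪ ({ω | y ω = -1} ∩ x ⁻¹' Ioi z))
              + P {ω | ¬(y ω = 1 ∨ y ω = -1)} := measure_union_le _ _
        _ = P (({ω | y ω = 1} ∩ x ⁻¹' Iio (-z)) ∪ ({ω | y ω = -1} ∩ x ⁻¹' Ioi z)) := by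
              rw [hN, add_zero]
        _ ≤ _ := measure_union_le _ _
    calc (P ({ω | y ω * x ω < 0} ∩ {ω | |x ω| > z})).toReal
        ≤ (P ({ω | y ω = 1} ∩ x ⁻¹' Iio (-z)) + P ({ω | y ω = -1} ∩ x ⁻¹' Ioi z)).toReal :=
          ENNReal.toReal_mono (by finiteness) h4
      _ = _ := ENNReal.toReal_add (measure_ne_top _ _) (measure_ne_top _ _)
  -- split of the tail of |x|
  have hsplit : (P {ω | |x ω| > z}).toReal
      = (P (x ⁻¹' Iio (-z))).toReal + (P (x ⁻¹' Ioi z)).toReal := by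
    have hset : {ω | |x ω| > z} = x ⁻¹' Iio (-z) ∪ x ⁻¹' Ioi z := by
      ext ω
      simp only [mem_setOf_eq, mem_union, mem_preimage, mem_Iio, mem_Ioi, gt_iff_lt, lt_abs]
      constructor
      · rintro (h | h)
        · right; exact h
        · left; linarith
      · rintro (h | h)
        · right; linarith
        · left; exact h
    have hdisj : Disjoint (x ⁻¹' Iio (-z)) (x ⁻¹' Ioi z) := by
      rw [Set.disjoint_left]
      intro ω h1 h2
      simp only [mem_preimage, mem_Iio, mem_Ioi] at h1 h2
      linarith
    rw [hset, measure_union hdisj (hxmeas measurableSet_Ioi),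
      ENNReal.toReal_add (measure_ne_top _ _) (measure_ne_top _ _)]
  rw [hsplit]
  nlinarith [ENNReal.toReal_nonneg (a := P (x ⁻¹' Iio (-z))),
    ENNReal.toReal_nonneg (a := P (x ⁻¹' Ioi z))]

/-- one-dimensional logistic regression with `θ* > 0` and `λ = 0`, so that
`∇ℓ(θ,x,y) = -σ(yxθ)·yx`. (i) For `θ ≤ 0` the conditional probability that the gradient
direction equals `-1` given `|∇ℓ| > z` tends to `1`; (ii) for `θ > 0` the gradient is no
longer heavy-tailed relative to the covariate: `P(|∇ℓ| > z)/P(|x| > z) → 0`. -/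
theorem logistic_one_dim_degenerate
    {Ω : Type*} [MeasurableSpace Ω] (P : Measure Ω) [IsProbabilityMeasure P]
    (x : Ω → ℝ) (y : Ω → ℝ)
    (hxmeas : Measurable x) (hymeas : Measurable y)
    (hy : ∀ᵐ ω ∂P, y ω = 1 ∨ y ω = -1)
    (θstar : ℝ) (hθstar : 0 < θstar)
    (hcond : ∀ S : Set ℝ, MeasurableSet S →
        (P ({ω | y ω = 1} ∩ x ⁻¹' S)).toReal
          = ∫ ω in x ⁻¹' S, 1 / (1 + Real.exp (-(x ω * θstar))) ∂P)
    (α : ℝ) (hα : α ∈ Set.Ioo (1:ℝ) 2)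
    (hxpos : ∀ z : ℝ, 0 < P {ω | |x ω| > z})
    (hreg : ∀ t : ℝ, 0 < t →
        Tendsto (fun z : ℝ => (P {ω | |x ω| > t * z}).toReal / (P {ω | |x ω| > z}).toReal)
          atTop (𝓝 (t ^ (-α))))
    (μ1 μneg : ℝ) (hμ1nonneg : 0 ≤ μ1) (hμnegnonneg : 0 ≤ μneg) (hsum : μ1 + μneg = 1)
    (hang1 : Tendsto (fun z : ℝ =>
        (P ({ω | x ω / |x ω| = 1} ∩ {ω | |x ω| > z})).toReal / (P {ω | |x ω| > z}).toReal)
        atTop (𝓝 μ1))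
    (hangneg : Tendsto (fun z : ℝ =>
        (P ({ω | x ω / |x ω| = -1} ∩ {ω | |x ω| > z})).toReal / (P {ω | |x ω| > z}).toReal)
        atTop (𝓝 μneg))
    (hμ1pos : 0 < μ1) :
    (∀ θ : ℝ, θ ≤ 0 →
      Tendsto (fun z : ℝ =>
          (P ({ω | (-(logisticSigma (y ω * x ω * θ)) * (y ω * x ω)) /
                |(-(logisticSigma (y ω * x ω * θ)) * (y ω * x ω))| = -1}
              ∩ {ω | |(-(logisticSigma (y ω * x ω * θ)) * (y ω * x ω))| > z})).toReal /
            (P {ω | |(-(logisticSigma (y ω * x ω * θ)) * (y ω * x ω))| > z}).toReal)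
        atTop (𝓝 1)) ∧
    (∀ θ : ℝ, 0 < θ →
      Tendsto (fun z : ℝ =>
          (P {ω | |(-(logisticSigma (y ω * x ω * θ)) * (y ω * x ω))| > z}).toReal /
            (P {ω | |x ω| > z}).toReal)
        atTop (𝓝 0)) := by
  constructor
  · intro θ hθ
    have hpx : ∀ z, 0 < (P {ω | |x ω| > z}).toReal :=
      fun z => ENNReal.toReal_pos (hxpos z).ne' (measure_ne_top _ _)
    have hN : P {ω | ¬(y ω = 1 ∨ y ω = -1)} = 0 := ae_iff.mp hy
    have hgmeas : Measurable (fun ω => -(logisticSigma (y ω * x ω * θ)) * (y ω * x ω)) :=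
      ((logisticSigma_continuous.measurable.comp
        ((hymeas.mul hxmeas).mul_const θ)).neg).mul (hymeas.mul hxmeas)
    -- pointwise absolute value identity on good ω
    have habs : ∀ ω : Ω, y ω = 1 ∨ y ω = -1 →
        |(-(logisticSigma (y ω * x ω * θ)) * (y ω * x ω))|
          = logisticSigma (y ω * x ω * θ) * |x ω| := by
      intro ω hyω
      have hyabs : |y ω| = 1 := by rcases hyω with h | h <;> rw [h] <;> norm_num
      rw [abs_mul, abs_neg, abs_of_pos (logisticSigma_pos _), abs_mul, hyabs, one_mul]
    -- Step A : numerator identity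
    have stepA : ∀ z : ℝ, 0 < z →
        (P ({ω | (-(logisticSigma (y ω * x ω * θ)) * (y ω * x ω)) /
                |(-(logisticSigma (y ω * x ω * θ)) * (y ω * x ω))| = -1}
              ∩ {ω | |(-(logisticSigma (y ω * x ω * θ)) * (y ω * x ω))| > z})).toReal
          = (P {ω | |(-(logisticSigma (y ω * x ω * θ)) * (y ω * x ω))| > z}).toReal
            - (P ({ω | y ω * x ω < 0}
                ∩ {ω | |(-(logisticSigma (y ω * x ω * θ)) * (y ω * x ω))| > z})).toReal := by
      intro z hz
      have key : ∀ ω : Ω, y ω = 1 ∨ y ω = -1 →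
          |(-(logisticSigma (y ω * x ω * θ)) * (y ω * x ω))| > z →
          (((-(logisticSigma (y ω * x ω * θ)) * (y ω * x ω)) /
              |(-(logisticSigma (y ω * x ω * θ)) * (y ω * x ω))| = -1) ↔ 0 < y ω * x ω) := by
        intro ω hyω hω
        have hσ0 : 0 < logisticSigma (y ω * x ω * θ) := logisticSigma_pos _
        have hg0 : -(logisticSigma (y ω * x ω * θ)) * (y ω * x ω) ≠ 0 := by
          intro h
          rw [h] at hω
          simp at hω
          linarith
        constructor
        · intro h
          by_contra hc
          push_neg at hc
          have hgpos : 0 ≤ -(logisticSigma (y ω * x ω * θ)) * (y ω * x ω) := by nlinarith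
          have hgpos' : 0 < -(logisticSigma (y ω * x ω * θ)) * (y ω * x ω) :=
            lt_of_le_of_ne hgpos (Ne.symm hg0)
          rw [abs_of_pos hgpos', div_self hg0] at h
          linarith
        · intro h
          have hgneg : -(logisticSigma (y ω * x ω * θ)) * (y ω * x ω) < 0 := by nlinarith
          rw [abs_of_neg hgneg, div_neg, div_self hg0]
      -- a.e. equality of numerator set with {yx>0} ∩ G
      have hae1 : ({ω | (-(logisticSigma (y ω * x ω * θ)) * (y ω * x ω)) /
                |(-(logisticSigma (y ω * x ω * θ)) * (y ω * x ω))| = -1}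
              ∩ {ω | |(-(logisticSigma (y ω * x ω * θ)) * (y ω * x ω))| > z} : Set Ω)
          =ᵐ[P] ({ω | 0 < y ω * x ω}
              ∩ {ω | |(-(logisticSigma (y ω * x ω * θ)) * (y ω * x ω))| > z} : Set Ω) := by
        rw [Filter.eventuallyEq_set]
        filter_upwards [hy] with ω hyω
        simp only [mem_inter_iff, mem_setOf_eq]
        constructor
        · rintro ⟨h1, h2⟩; exact ⟨(key ω hyω h2).1 h1, h2⟩
        · rintro ⟨h1, h2⟩; exact ⟨(key ω hyω h2).2 h1, h2⟩
      -- a.e. split of G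
      have hae2 : ({ω | |(-(logisticSigma (y ω * x ω * θ)) * (y ω * x ω))| > z} : Set Ω)
          =ᵐ[P] (({ω | 0 < y ω * x ω}
              ∩ {ω | |(-(logisticSigma (y ω * x ω * θ)) * (y ω * x ω))| > z})
            ∪ ({ω | y ω * x ω < 0}
              ∩ {ω | |(-(logisticSigma (y ω * x ω * θ)) * (y ω * x ω))| > z}) : Set Ω) := by
        rw [Filter.eventuallyEq_set]
        filter_upwards [hy] with ω hyω
        simp only [mem_union, mem_inter_iff, mem_setOf_eq]
        constructor
        · intro h2
          rcases lt_trichotomy (y ω * x ω) 0 with hc | hc | hc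
          · right; exact ⟨hc, h2⟩
          · exfalso
            have : -(logisticSigma (y ω * x ω * θ)) * (y ω * x ω) = 0 := by rw [hc]; ring
            rw [this] at h2
            simp at h2
            linarith
          · left; exact ⟨hc, h2⟩
        · rintro (⟨-, h2⟩ | ⟨-, h2⟩) <;> exact h2
      have hdisj : Disjoint
          ({ω | 0 < y ω * x ω}
              ∩ {ω | |(-(logisticSigma (y ω * x ω * θ)) * (y ω * x ω))| > z} : Set Ω)
          ({ω | y ω * x ω < 0}
              ∩ {ω | |(-(logisticSigma (y ω * x ω * θ)) * (y ω * x ω))| > z} : Set Ω) := by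
        rw [Set.disjoint_left]
        rintro ω ⟨h1, -⟩ ⟨h2, -⟩
        rw [mem_setOf_eq] at h1 h2
        linarith
      have hmeas2 : MeasurableSet ({ω | y ω * x ω < 0}
          ∩ {ω | |(-(logisticSigma (y ω * x ω * θ)) * (y ω * x ω))| > z} : Set Ω) := by
        refine MeasurableSet.inter ?_ ?_
        · exact measurableSet_lt (hymeas.mul hxmeas) measurable_const
        · exact measurableSet_lt measurable_const hgmeas.abs
      rw [measure_congr hae1, measure_congr hae2,
        measure_union hdisj hmeas2,
        ENNReal.toReal_add (measure_ne_top _ _) (measure_ne_top _ _)]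
      ring
    -- Step B : lower bound for the denominator
    have stepB : ∀ z : ℝ, 0 < z →
        (1 - Real.exp (-(2 * z * θstar))) * (P {ω | |x ω| > 2 * z}).toReal
          ≤ (P {ω | |(-(logisticSigma (y ω * x ω * θ)) * (y ω * x ω))| > z}).toReal := by
      intro z hz
      have hsub1 : ({ω | 0 < y ω * x ω} ∩ {ω | |x ω| > 2 * z} : Set Ω)
          ⊆ {ω | |(-(logisticSigma (y ω * x ω * θ)) * (y ω * x ω))| > z}
            ∪ {ω | ¬(y ω = 1 ∨ y ω = -1)} := by
        rintro ω ⟨h1, h2⟩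
        rw [mem_setOf_eq] at h1
        rw [mem_setOf_eq] at h2
        by_cases hyω : y ω = 1 ∨ y ω = -1
        · left
          rw [mem_setOf_eq, habs ω hyω]
          have hu : y ω * x ω * θ ≤ 0 := mul_nonpos_of_nonneg_of_nonpos h1.le hθ
          have hσ : 1/2 ≤ logisticSigma (y ω * x ω * θ) := half_le_logisticSigma hu
          nlinarith [abs_nonneg (x ω)]
        · right; exact hyω
      have h1 : P ({ω | 0 < y ω * x ω} ∩ {ω | |x ω| > 2 * z})
          ≤ P {ω | |(-(logisticSigma (y ω * x ω * θ)) * (y ω * x ω))| > z} := by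
        calc P ({ω | 0 < y ω * x ω} ∩ {ω | |x ω| > 2 * z})
            ≤ P ({ω | |(-(logisticSigma (y ω * x ω * θ)) * (y ω * x ω))| > z}
                ∪ {ω | ¬(y ω = 1 ∨ y ω = -1)}) := measure_mono hsub1
          _ ≤ _ + P {ω | ¬(y ω = 1 ∨ y ω = -1)} := measure_union_le _ _
          _ = _ := by rw [hN, add_zero]
      have hsub2 : ({ω | |x ω| > 2 * z} : Set Ω)
          ⊆ (({ω | 0 < y ω * x ω} ∩ {ω | |x ω| > 2 * z})
              ∪ ({ω | y ω * x ω < 0} ∩ {ω | |x ω| > 2 * z}))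
            ∪ {ω | ¬(y ω = 1 ∨ y ω = -1)} := by
        intro ω h2
        rw [mem_setOf_eq] at h2
        by_cases hyω : y ω = 1 ∨ y ω = -1
        · left
          rcases lt_trichotomy (y ω * x ω) 0 with hc | hc | hc
          · right; exact ⟨hc, h2⟩
          · exfalso
            have hx0 : x ω ≠ 0 := by
              intro h
              rw [h] at h2
              simp at h2
              linarith
            rcases hyω with h | h <;> rw [h] at hc <;> simp at hc <;> exact hx0 hc
          · left; exact ⟨hc, h2⟩
        · right; exact hyω
      have h2 : (P {ω | |x ω| > 2 * z}).toReal
          ≤ (P ({ω | 0 < y ω * x ω} ∩ {ω | |x ω| > 2 * z})).toReal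
            + (P ({ω | y ω * x ω < 0} ∩ {ω | |x ω| > 2 * z})).toReal := by
        have hchain : P {ω | |x ω| > 2 * z}
            ≤ P ({ω | 0 < y ω * x ω} ∩ {ω | |x ω| > 2 * z})
                + P ({ω | y ω * x ω < 0} ∩ {ω | |x ω| > 2 * z}) := by
          refine le_trans (measure_mono hsub2) ?_
          refine le_trans (measure_union_le _ _) ?_
          rw [hN, add_zero]
          exact measure_union_le _ _
        calc (P {ω | |x ω| > 2 * z}).toReal
            ≤ (P ({ω | 0 < y ω * x ω} ∩ {ω | |x ω| > 2 * z})
                + P ({ω | y ω * x ω < 0} ∩ {ω | |x ω| > 2 * z})).toReal :=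
              ENNReal.toReal_mono (by finiteness) hchain
          _ = _ := ENNReal.toReal_add (measure_ne_top _ _) (measure_ne_top _ _)
      have h3 : (P ({ω | y ω * x ω < 0} ∩ {ω | |x ω| > 2 * z})).toReal
          ≤ Real.exp (-(2 * z * θstar)) * (P {ω | |x ω| > 2 * z}).toReal :=
        tail_bound P x y hxmeas hymeas hy θstar hθstar hcond (by linarith)
      have h4 : (P ({ω | 0 < y ω * x ω} ∩ {ω | |x ω| > 2 * z})).toReal
          ≤ (P {ω | |(-(logisticSigma (y ω * x ω * θ)) * (y ω * x ω))| > z}).toReal :=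
        ENNReal.toReal_mono (measure_ne_top _ _) h1
      nlinarith
    -- positivity of the denominator
    have hGpos : ∀ z : ℝ, 0 < z →
        0 < (P {ω | |(-(logisticSigma (y ω * x ω * θ)) * (y ω * x ω))| > z}).toReal := by
      intro z hz
      have he : Real.exp (-(2 * z * θstar)) < 1 := by
        rw [Real.exp_lt_one_iff]
        nlinarith
      have := stepB z hz
      nlinarith [hpx (2 * z)]
    -- Step C : the bad ratio tends to 0
    have stepC : Tendsto (fun z : ℝ =>
        (P ({ω | y ω * x ω < 0}
            ∩ {ω | |(-(logisticSigma (y ω * x ω * θ)) * (y ω * x ω))| > z})).toReal /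
          (P {ω | |(-(logisticSigma (y ω * x ω * θ)) * (y ω * x ω))| > z}).toReal)
        atTop (𝓝 0) := by
      -- bound function
      have hbound : ∀ z : ℝ, 0 < z →
          (P ({ω | y ω * x ω < 0}
              ∩ {ω | |(-(logisticSigma (y ω * x ω * θ)) * (y ω * x ω))| > z})).toReal /
            (P {ω | |(-(logisticSigma (y ω * x ω * θ)) * (y ω * x ω))| > z}).toReal
          ≤ (Real.exp (-(z * θstar)) / (1 - Real.exp (-(2 * z * θstar))))
            * ((P {ω | |x ω| > z}).toReal / (P {ω | |x ω| > 2 * z}).toReal) := by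
        intro z hz
        have hnum : (P ({ω | y ω * x ω < 0}
              ∩ {ω | |(-(logisticSigma (y ω * x ω * θ)) * (y ω * x ω))| > z})).toReal
            ≤ Real.exp (-(z * θstar)) * (P {ω | |x ω| > z}).toReal := by
          have hsub : ({ω | y ω * x ω < 0}
                ∩ {ω | |(-(logisticSigma (y ω * x ω * θ)) * (y ω * x ω))| > z} : Set Ω)
              ⊆ ({ω | y ω * x ω < 0} ∩ {ω | |x ω| > z})
                ∪ {ω | ¬(y ω = 1 ∨ y ω = -1)} := by
            rintro ω ⟨h1, h2⟩
            rw [mem_setOf_eq] at h2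
            by_cases hyω : y ω = 1 ∨ y ω = -1
            · left
              refine ⟨h1, ?_⟩
              rw [mem_setOf_eq]
              rw [habs ω hyω] at h2
              have hσ1 : logisticSigma (y ω * x ω * θ) ≤ 1 := logisticSigma_le_one _
              have hσ0 : 0 < logisticSigma (y ω * x ω * θ) := logisticSigma_pos _
              nlinarith [abs_nonneg (x ω)]
            · right; exact hyω
          have h1 : P ({ω | y ω * x ω < 0}
                ∩ {ω | |(-(logisticSigma (y ω * x ω * θ)) * (y ω * x ω))| > z})
              ≤ P ({ω | y ω * x ω < 0} ∩ {ω | |x ω| > z}) := by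
            calc P _ ≤ P (({ω | y ω * x ω < 0} ∩ {ω | |x ω| > z})
                  ∪ {ω | ¬(y ω = 1 ∨ y ω = -1)}) := measure_mono hsub
              _ ≤ _ + P {ω | ¬(y ω = 1 ∨ y ω = -1)} := measure_union_le _ _
              _ = _ := by rw [hN, add_zero]
          calc (P ({ω | y ω * x ω < 0}
                ∩ {ω | |(-(logisticSigma (y ω * x ω * θ)) * (y ω * x ω))| > z})).toReal
              ≤ (P ({ω | y ω * x ω < 0} ∩ {ω | |x ω| > z})).toReal :=
                ENNReal.toReal_mono (measure_ne_top _ _) h1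
            _ ≤ _ := tail_bound P x y hxmeas hymeas hy θstar hθstar hcond hz.le
        have he : Real.exp (-(2 * z * θstar)) < 1 := by
          rw [Real.exp_lt_one_iff]; nlinarith
        have hB : 0 < (1 - Real.exp (-(2 * z * θstar))) * (P {ω | |x ω| > 2 * z}).toReal := by
          have := hpx (2 * z); nlinarith
        rw [div_mul_div_comm]
        rw [div_le_div_iff₀ (hGpos z hz) hB]
        have hb := stepB z hz
        nlinarith [ENNReal.toReal_nonneg
          (a := P ({ω | y ω * x ω < 0}
            ∩ {ω | |(-(logisticSigma (y ω * x ω * θ)) * (y ω * x ω))| > z})),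
          Real.exp_pos (-(z * θstar)), hpx z,
          mul_nonneg (Real.exp_pos (-(z * θstar))).le (hpx z).le]
      -- limit of the bound
      have hexp1 : Tendsto (fun z : ℝ => Real.exp (-(z * θstar))) atTop (𝓝 0) := by
        apply Real.tendsto_exp_atBot.comp
        exact tendsto_neg_atBot_iff.mpr (tendsto_id.atTop_mul_const hθstar)
      have hexp2 : Tendsto (fun z : ℝ => Real.exp (-(2 * z * θstar))) atTop (𝓝 0) := by
        apply Real.tendsto_exp_atBot.comp
        apply tendsto_neg_atBot_iff.mpr
        have : (fun z : ℝ => 2 * z * θstar) = fun z : ℝ => z * (2 * θstar) := by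
          ext z; ring
        rw [this]
        exact tendsto_id.atTop_mul_const (by linarith)
      have hT1 : Tendsto (fun z : ℝ =>
          Real.exp (-(z * θstar)) / (1 - Real.exp (-(2 * z * θstar)))) atTop (𝓝 0) := by
        have hden : Tendsto (fun z : ℝ => 1 - Real.exp (-(2 * z * θstar))) atTop (𝓝 (1 - 0)) :=
          tendsto_const_nhds.sub hexp2
        have := hexp1.div hden (by norm_num)
        simp only [sub_zero, div_one] at this; exact this
      have hT2 : Tendsto (fun z : ℝ =>
          (P {ω | |x ω| > z}).toReal / (P {ω | |x ω| > 2 * z}).toReal) atTop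
          (𝓝 (((2:ℝ) ^ (-α))⁻¹)) := by
        have h2pos : (0:ℝ) < (2:ℝ) ^ (-α) := Real.rpow_pos_of_pos (by norm_num) _
        have := (hreg 2 (by norm_num)).inv₀ h2pos.ne'
        refine this.congr ?_
        intro z
        rw [inv_div]
      have hTb : Tendsto (fun z : ℝ =>
          (Real.exp (-(z * θstar)) / (1 - Real.exp (-(2 * z * θstar))))
            * ((P {ω | |x ω| > z}).toReal / (P {ω | |x ω| > 2 * z}).toReal)) atTop (𝓝 0) := by
        have := hT1.mul hT2
        simpa using this
      refine tendsto_of_tendsto_of_tendsto_of_le_of_le' tendsto_const_nhds hTb ?_ ?_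
      · filter_upwards with z
        exact div_nonneg ENNReal.toReal_nonneg ENNReal.toReal_nonneg
      · filter_upwards [eventually_gt_atTop (0:ℝ)] with z hz
        exact hbound z hz
    -- Step D : conclude
    have hfinal : Tendsto (fun z : ℝ => 1 -
        (P ({ω | y ω * x ω < 0}
            ∩ {ω | |(-(logisticSigma (y ω * x ω * θ)) * (y ω * x ω))| > z})).toReal /
          (P {ω | |(-(logisticSigma (y ω * x ω * θ)) * (y ω * x ω))| > z}).toReal)
        atTop (𝓝 1) := by
      have hone : Tendsto (fun _ : ℝ => (1:ℝ)) atTop (𝓝 1) := tendsto_const_nhds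
      have := hone.sub stepC
      simpa using this
    refine hfinal.congr' ?_
    filter_upwards [eventually_gt_atTop (0:ℝ)] with z hz
    rw [stepA z hz, sub_div, div_self (hGpos z hz).ne']
  · intro θ hθ
    have hpx : ∀ z, 0 < (P {ω | |x ω| > z}).toReal :=
      fun z => ENNReal.toReal_pos (hxpos z).ne' (measure_ne_top _ _)
    have hN : P {ω | ¬(y ω = 1 ∨ y ω = -1)} = 0 := ae_iff.mp hy
    -- inclusion for large z
    have hsub : ∀ z : ℝ, max 1 (Real.exp (-1) / θ) ≤ z →
        {ω | |(-(logisticSigma (y ω * x ω * θ)) * (y ω * x ω))| > z} ⊆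
          ({ω | y ω * x ω < 0} ∩ {ω | |x ω| > z}) ∪ {ω | ¬(y ω = 1 ∨ y ω = -1)} := by
      intro z hzle ω hω
      rw [mem_setOf_eq] at hω
      by_cases hyω : y ω = 1 ∨ y ω = -1
      · have hyabs : |y ω| = 1 := by rcases hyω with h | h <;> rw [h] <;> norm_num
        have habs : |(-(logisticSigma (y ω * x ω * θ)) * (y ω * x ω))|
            = logisticSigma (y ω * x ω * θ) * |x ω| := by
          rw [abs_mul, abs_neg, abs_of_pos (logisticSigma_pos _), abs_mul, hyabs, one_mul]
        have hz1 : (1:ℝ) ≤ z := le_trans (le_max_left _ _) hzle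
        by_cases hsign : y ω * x ω < 0
        · left
          refine ⟨hsign, ?_⟩
          rw [mem_setOf_eq]
          have hσ1 : logisticSigma (y ω * x ω * θ) ≤ 1 := logisticSigma_le_one _
          have hσ0 : 0 < logisticSigma (y ω * x ω * θ) := logisticSigma_pos _
          rw [habs] at hω
          nlinarith [abs_nonneg (x ω)]
        · exfalso
          push_neg at hsign
          set u := y ω * x ω * θ with hu
          have hu0 : 0 ≤ u := mul_nonneg hsign hθ.le
          have hxeq : |x ω| = y ω * x ω := by
            rw [← abs_of_nonneg hsign, abs_mul, hyabs, one_mul]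
          have hue : u * Real.exp (-u) ≤ Real.exp (-1) := by
            have h1 : u ≤ Real.exp (u - 1) := by linarith [Real.add_one_le_exp (u - 1)]
            calc u * Real.exp (-u) ≤ Real.exp (u - 1) * Real.exp (-u) := by
                  nlinarith [Real.exp_pos (-u)]
              _ = Real.exp (-1) := by rw [← Real.exp_add]; ring_nf
          have hσe : logisticSigma u ≤ Real.exp (-u) := logisticSigma_le_exp u
          have hσ0 : 0 < logisticSigma u := logisticSigma_pos u
          have hgle : |(-(logisticSigma (y ω * x ω * θ)) * (y ω * x ω))| ≤ Real.exp (-1) / θ := by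
            rw [habs, hxeq, le_div_iff₀ hθ]
            have heq : logisticSigma u * (y ω * x ω) * θ = logisticSigma u * u := by
              rw [hu]; ring
            rw [heq]
            calc logisticSigma u * u ≤ Real.exp (-u) * u := by nlinarith
              _ ≤ Real.exp (-1) := by nlinarith
          have hz2 : Real.exp (-1) / θ ≤ z := le_trans (le_max_right _ _) hzle
          linarith
      · right; exact hyω
    -- eventual bound
    have hev : ∀ᶠ z : ℝ in atTop,
        (P {ω | |(-(logisticSigma (y ω * x ω * θ)) * (y ω * x ω))| > z}).toReal /
            (P {ω | |x ω| > z}).toReal ≤ Real.exp (-(z * θstar)) := by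
      filter_upwards [eventually_ge_atTop (max 1 (Real.exp (-1) / θ))] with z hzle
      have hz0 : (0:ℝ) ≤ z := le_trans (by positivity) (le_trans (le_max_left _ _) hzle)
      have hP : (P {ω | |(-(logisticSigma (y ω * x ω * θ)) * (y ω * x ω))| > z}).toReal
          ≤ Real.exp (-(z * θstar)) * (P {ω | |x ω| > z}).toReal := by
        have h1 : P {ω | |(-(logisticSigma (y ω * x ω * θ)) * (y ω * x ω))| > z}
            ≤ P ({ω | y ω * x ω < 0} ∩ {ω | |x ω| > z}) := by
          calc P {ω | |(-(logisticSigma (y ω * x ω * θ)) * (y ω * x ω))| > z}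
              ≤ P (({ω | y ω * x ω < 0} ∩ {ω | |x ω| > z}) ∪ {ω | ¬(y ω = 1 ∨ y ω = -1)}) :=
                measure_mono (hsub z hzle)
            _ ≤ P ({ω | y ω * x ω < 0} ∩ {ω | |x ω| > z}) + P {ω | ¬(y ω = 1 ∨ y ω = -1)} :=
                measure_union_le _ _
            _ = _ := by rw [hN, add_zero]
        calc (P {ω | |(-(logisticSigma (y ω * x ω * θ)) * (y ω * x ω))| > z}).toReal
            ≤ (P ({ω | y ω * x ω < 0} ∩ {ω | |x ω| > z})).toReal :=
              ENNReal.toReal_mono (measure_ne_top _ _) h1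
          _ ≤ Real.exp (-(z * θstar)) * (P {ω | |x ω| > z}).toReal :=
              tail_bound P x y hxmeas hymeas hy θstar hθstar hcond hz0
      rw [div_le_iff₀ (hpx z)]
      exact hP
    have hexp : Tendsto (fun z : ℝ => Real.exp (-(z * θstar))) atTop (𝓝 0) := by
      apply Real.tendsto_exp_atBot.comp
      exact tendsto_neg_atBot_iff.mpr (tendsto_id.atTop_mul_const hθstar)
    refine tendsto_of_tendsto_of_tendsto_of_le_of_le' tendsto_const_nhds hexp ?_ hev
    filter_upwards with z
    exact div_nonneg ENNReal.toReal_nonneg ENNReal.toReal_nonneg
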